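/- Let e be a transitive relation on a set E. Every regular closed subset a of e satisfies a = cl(⋃{⟨c,d,U⟩ : (c,d,U) ∈ F(e) and ⟨c,d,U⟩ ⊆ a}); in particular, the complete lattice Reg(e) is spatial: every element of Reg(e) is the join of the completely join-irreducible elements below it. -/
import Mathlib


/-- A binary relation (as a set of pairs) is transitive. -/
def TransRel {E : Type*} (a : Set (E × E)) : Prop :=
  ∀ x y z : E, (x, y) ∈ a → (y, z) ∈ a → (x, z) ∈ a

/-- The transitive closure of a set of pairs. -/
def tcl {E : Type*} (a : Set (E × E)) : Set (E × E) :=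
  {p | Relation.TransGen (fun u v => (u, v) ∈ a) p.1 p.2}

/-- The interior of `a` relative to `e`. -/
def tint {E : Type*} (e a : Set (E × E)) : Set (E × E) :=
  e \ tcl (e \ a)

/-- `a` is a closed subset of `e`. -/
def IsClosedIn {E : Type*} (e a : Set (E × E)) : Prop :=
  a ⊆ e ∧ TransRel a

/-- `a` is an open subset of `e`. -/
def IsOpenIn {E : Type*} (e a : Set (E × E)) : Prop :=
  a ⊆ e ∧ TransRel (e \ a)

/-- `a` is a clopen subset of `e`. -/
def IsClopenIn {E : Type*} (e a : Set (E × E)) : Prop :=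
  a ⊆ e ∧ TransRel a ∧ TransRel (e \ a)

/-- `a` is a regular closed subset of `e`. -/
def RegClosed {E : Type*} (e a : Set (E × E)) : Prop :=
  a ⊆ e ∧ a = tcl (tint e a)

/-- The reflexive preordering `x ⊴ y` associated with `e`. -/
def rle {E : Type*} (e : Set (E × E)) (x y : E) : Prop :=
  (x, y) ∈ e ∨ x = y

/-- `x ≡ y`: `x ⊴ y` and `y ⊴ x`. -/
def eqv {E : Type*} (e : Set (E × E)) (x y : E) : Prop :=
  rle e x y ∧ rle e y x

/-- `e` is square-free. -/
def SqFree {E : Type*} (e : Set (E × E)) : Prop :=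
  ∀ a b x y : E, (a, b) ∈ e → rle e a x → rle e x b → rle e a y → rle e y b →
    rle e x y ∨ rle e y x

/-- The interval `[a,b] = {x | a ⊴ x ⊴ b}`. -/
def cce {E : Type*} (e : Set (E × E)) (a b : E) : Set E :=
  {x | rle e a x ∧ rle e x b}

/-- `(a,b,U) ∈ F(e)`. -/
def Ftriple {E : Type*} (e : Set (E × E)) (a b : E) (U : Set E) : Prop :=
  (a, b) ∈ e ∧ U ⊆ cce e a b ∧ (a ≠ b → a ∉ U ∧ b ∈ U)

/-- The clopen set `⟨a,b,U⟩ = e ∩ (({a} ∪ Uᶜ) × ({b} ∪ U))`. -/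
def pji {E : Type*} (e : Set (E × E)) (a b : E) (U : Set E) : Set (E × E) :=
  e ∩ ((({a} : Set E) ∪ (cce e a b \ U)) ×ˢ (({b} : Set E) ∪ U))

/-- The set `p₋` associated with `p = ⟨a,b,U⟩`: if `a ≠ b` it is
`p \ ([a] × [b])`, and if `a = b` it is `p \ {(a,a)}`. -/
def pminus {E : Type*} (e : Set (E × E)) (a b : E) (U : Set E) : Set (E × E) :=
  {z ∈ pji e a b U | ¬ ((a ≠ b ∧ eqv e z.1 a ∧ eqv e z.2 b) ∨ (a = b ∧ z = (a, a)))}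

section Aux
variable {E : Type*} {e a t p : Set (E × E)}

lemma mem_tcl' {a : Set (E × E)} {x y : E} :
    (x, y) ∈ tcl a ↔ Relation.TransGen (fun u v => (u, v) ∈ a) x y := Iff.rfl

lemma subset_tcl (a : Set (E × E)) : a ⊆ tcl a := by
  rintro ⟨x, y⟩ h
  exact Relation.TransGen.single h

lemma transRel_tcl (a : Set (E × E)) : TransRel (tcl a) :=
  fun _ _ _ h h' => Relation.TransGen.trans h h'

lemma tcl_subset (h : a ⊆ t) (ht : TransRel t) : tcl a ⊆ t := by
  rintro ⟨x, y⟩ hxy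
  simp only [mem_tcl'] at hxy
  induction hxy with
  | single h' => exact h h'
  | tail _ h' ih => exact ht _ _ _ ih (h h')

lemma tcl_mono (h : a ⊆ t) : tcl a ⊆ tcl t :=
  tcl_subset (h.trans (subset_tcl t)) (transRel_tcl t)

lemma tcl_eq_self (ht : TransRel t) : tcl t = t :=
  Set.Subset.antisymm (tcl_subset (le_refl t) ht) (subset_tcl t)

lemma tint_subset (ha : a ⊆ e) : tint e a ⊆ a := by
  rintro ⟨x, y⟩ ⟨hxe, hxn⟩
  by_contra h
  exact hxn (subset_tcl _ ⟨hxe, h⟩)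

lemma clopen_regClosed (hsub : p ⊆ e) (hc : TransRel p) (ho : TransRel (e \ p)) :
    RegClosed e p := by
  refine ⟨hsub, ?_⟩
  have h1 : tint e p = p := by
    unfold tint
    rw [tcl_eq_self ho, Set.diff_diff_right_self, Set.inter_eq_self_of_subset_right hsub]
  rw [h1, tcl_eq_self hc]

lemma rle_trans (he : TransRel e) {x y z : E} (h1 : rle e x y) (h2 : rle e y z) :
    rle e x z := by
  rcases h1 with h1 | rfl
  · rcases h2 with h2 | rfl
    · exact Or.inl (he _ _ _ h1 h2)
    · exact Or.inl h1
  · exact h2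

lemma rle_refl (x : E) : rle e x x := Or.inr rfl

lemma eqv_refl (x : E) : eqv e x x := ⟨rle_refl x, rle_refl x⟩

lemma mem_pji {c d : E} {U : Set E} {x y : E} :
    (x, y) ∈ pji e c d U ↔ (x, y) ∈ e ∧ (x = c ∨ x ∈ cce e c d \ U) ∧ (y = d ∨ y ∈ U) := by
  simp [pji, Set.mem_prod]

/-- A point on the "source side" is above `c`. -/
lemma sideA_rle {c d : E} {U : Set E} {x : E} (hA : x = c ∨ x ∈ cce e c d \ U) :
    rle e c x := by
  rcases hA with rfl | hx
  · exact rle_refl x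
  · exact hx.1.1

/-- A point on the "target side" is below `d`. -/
lemma sideB_rle {c d : E} {U : Set E} (hF : Ftriple e c d U) {y : E}
    (hB : y = d ∨ y ∈ U) : rle e y d := by
  rcases hB with rfl | hy
  · exact rle_refl y
  · exact (hF.2.1 hy).2

/-- Anything on both sides forces `c = d` and equals `c`. -/
lemma sideAB {c d : E} {U : Set E} (hF : Ftriple e c d U) {w : E}
    (hA : w = c ∨ w ∈ cce e c d \ U) (hB : w = d ∨ w ∈ U) : c = d ∧ w = c := by
  by_cases hcd : c = d
  · refine ⟨hcd, ?_⟩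
    rcases hA with rfl | hA
    · rfl
    · rcases hB with rfl | hB
      · exact hcd.symm
      · exact absurd hB hA.2
  · obtain ⟨hcU, hdU⟩ := hF.2.2 hcd
    rcases hA with rfl | hA
    · rcases hB with rfl | hB
      · exact absurd rfl hcd
      · exact absurd hB hcU
    · rcases hB with rfl | hB
      · exact absurd hdU hA.2
      · exact absurd hB hA.2

lemma pji_clopen (he : TransRel e) {c d : E} {U : Set E} (hF : Ftriple e c d U) :
    pji e c d U ⊆ e ∧ TransRel (pji e c d U) ∧ TransRel (e \ pji e c d U) := by
  refine ⟨Set.inter_subset_left, ?_, ?_⟩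
  · intro x y z hxy hyz
    rw [mem_pji] at hxy hyz ⊢
    exact ⟨he _ _ _ hxy.1 hyz.1, hxy.2.1, hyz.2.2⟩
  · rintro x y z ⟨hxy, hxyp⟩ ⟨hyz, hyzp⟩
    refine ⟨he _ _ _ hxy hyz, ?_⟩
    intro hxz
    rw [mem_pji] at hxz
    have hcy : rle e c y := rle_trans he (sideA_rle hxz.2.1) (Or.inl hxy)
    have hyd : rle e y d := rle_trans he (Or.inl hyz) (sideB_rle hF hxz.2.2)
    by_cases hyU : y ∈ U
    · exact hxyp (mem_pji.2 ⟨hxy, hxz.2.1, Or.inr hyU⟩)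
    · exact hyzp (mem_pji.2 ⟨hyz, Or.inr ⟨⟨hcy, hyd⟩, hyU⟩, hxz.2.2⟩)

lemma mem_pminus {c d : E} {U : Set E} {x y : E} :
    (x, y) ∈ pminus e c d U ↔ (x, y) ∈ pji e c d U ∧
      ¬ ((c ≠ d ∧ eqv e x c ∧ eqv e y d) ∨ (c = d ∧ (x, y) = (c, c))) := by
  simp [pminus]
  tauto

lemma pminus_clopen (he : TransRel e) {c d : E} {U : Set E} (hF : Ftriple e c d U) :
    pminus e c d U ⊆ e ∧ TransRel (pminus e c d U) ∧ TransRel (e \ pminus e c d U) := by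
  obtain ⟨hpe, hpt, hpo⟩ := pji_clopen he hF
  refine ⟨fun z hz => hpe hz.1, ?_, ?_⟩
  · intro x y z hxy hyz
    rw [mem_pminus] at hxy hyz ⊢
    have hxz : (x, z) ∈ pji e c d U := hpt _ _ _ hxy.1 hyz.1
    refine ⟨hxz, ?_⟩
    have hyAB := sideAB hF (mem_pji.1 hyz.1).2.1 (mem_pji.1 hxy.1).2.2
    rintro (⟨hcd, _, _⟩ | ⟨hcd, hz⟩)
    · exact hcd hyAB.1
    · -- c = d, x = c, z = c, y = c, so (x,y) = (c,c) contradicting hxy.2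
      have hx : x = c := (Prod.mk.injEq .. ▸ hz).1
      have hy : y = c := hyAB.2
      exact hxy.2 (Or.inr ⟨hcd, by rw [hx, hy]⟩)
  · rintro x y z ⟨hxy, hxyp⟩ ⟨hyz, hyzp⟩
    refine ⟨he _ _ _ hxy hyz, ?_⟩
    intro hxz
    rw [mem_pminus] at hxz
    rw [mem_pminus, not_and_or, not_not] at hxyp hyzp
    rcases hxyp with hxyp | hxyS
    · rcases hyzp with hyzp | hyzS
      · exact (hpo _ _ _ ⟨hxy, hxyp⟩ ⟨hyz, hyzp⟩).2 hxz.1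
      · -- (y,z) is a "crossing" pair
        rcases hyzS with ⟨hcd, hyc, hzd⟩ | ⟨hcd, hyz'⟩
        · have hxc : eqv e x c :=
            ⟨rle_trans he (Or.inl hxy) hyc.1, sideA_rle (mem_pji.1 hxz.1).2.1⟩
          exact hxz.2 (Or.inl ⟨hcd, hxc, hzd⟩)
        · have hy : y = c := (Prod.mk.injEq .. ▸ hyz').1
          have hz : z = c := (Prod.mk.injEq .. ▸ hyz').2
          subst hy; subst hz
          exact hxyp hxz.1
    · rcases hxyS with ⟨hcd, hxc, hyd⟩ | ⟨hcd, hxy'⟩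
      · have hzd : eqv e z d :=
          ⟨sideB_rle hF (mem_pji.1 hxz.1).2.2, rle_trans he hyd.2 (Or.inl hyz)⟩
        exact hxz.2 (Or.inl ⟨hcd, hxc, hzd⟩)
      · have hx : x = c := (Prod.mk.injEq .. ▸ hxy').1
        have hy : y = c := (Prod.mk.injEq .. ▸ hxy').2
        subst hx; subst hy
        rcases hyzp with hyzp | hyzS
        · exact hyzp hxz.1
        · exact hxz.2 hyzS

/-- crossing condition -/
def crossS {E : Type*} (e : Set (E × E)) (c d u v : E) : Prop :=
  (c ≠ d ∧ eqv e u c ∧ eqv e v d) ∨ (c = d ∧ (u, v) = (c, c))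

lemma crossing_step {c d : E} {U : Set E} (hF : Ftriple e c d U) {s : Set (E × E)}
    (hs : s ⊆ pji e c d U) {u v : E}
    (huv : Relation.TransGen (fun x y => (x, y) ∈ s) u v)
    (hcross : crossS e c d u v) : (u, v) ∈ s := by
  rcases Relation.TransGen.tail'_iff.1 huv with ⟨w, hw, hwv⟩
  rcases Relation.ReflTransGen.cases_tail hw with rfl | ⟨w', _, hw'⟩
  · exact hwv
  · have hwB := (mem_pji.1 (hs hw')).2.2
    have hwA := (mem_pji.1 (hs hwv)).2.1
    obtain ⟨hcd, hwc⟩ := sideAB hF hwA hwB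
    rcases hcross with ⟨hne, _⟩ | ⟨_, huv'⟩
    · exact absurd hcd hne
    · have hu : u = c := (Prod.mk.injEq .. ▸ huv').1
      rw [hu, ← hwc]
      exact hwv

lemma pji_min (he : TransRel e) {c d : E} {U : Set E} (hF : Ftriple e c d U)
    {a : Set (E × E)} (ha : RegClosed e a) (hsub : a ⊆ pji e c d U)
    {u v : E} (huv : (u, v) ∈ a) (hcross : crossS e c d u v) :
    pji e c d U ⊆ a := by
  obtain ⟨hae, haeq⟩ := ha
  have hint_sub : tint e a ⊆ pji e c d U := (tint_subset hae).trans hsub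
  -- (u,v) ∈ tcl (tint e a), so by the crossing step it is in tint e a itself
  have huv' : (u, v) ∈ tint e a := by
    have : (u, v) ∈ tcl (tint e a) := haeq ▸ huv
    exact crossing_step hF hint_sub this hcross
  -- `u ⊴ c` and `d ⊴ v`
  have huc : rle e u c := by
    rcases hcross with ⟨_, huc, _⟩ | ⟨_, huv''⟩
    · exact huc.1
    · exact (Prod.mk.injEq .. ▸ huv'').1 ▸ rle_refl u
  have hdv : rle e d v := by
    rcases hcross with ⟨_, _, hvd⟩ | ⟨hcd, huv''⟩
    · exact hvd.2
    · have : v = c := (Prod.mk.injEq .. ▸ huv'').2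
      rw [this, hcd]
      exact rle_refl d
  -- now show pji ⊆ tint e a ⊆ a
  intro z hz
  obtain ⟨s, t⟩ := z
  apply tint_subset hae
  have hz' := mem_pji.1 hz
  refine ⟨hz'.1, ?_⟩
  intro hst
  -- build a chain from u to v inside e \ a, contradicting huv' .2
  have hus : rle e u s := rle_trans he huc (sideA_rle hz'.2.1)
  have htv : rle e t v := rle_trans he (sideB_rle hF hz'.2.2) hdv
  have h1 : u ≠ s → (u, s) ∈ e \ a := by
    intro hne
    refine ⟨hus.resolve_right hne, ?_⟩
    intro hmem
    have hsB := (mem_pji.1 (hsub hmem)).2.2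
    obtain ⟨hcd, hsc⟩ := sideAB hF hz'.2.1 hsB
    rcases hcross with ⟨hne', _⟩ | ⟨_, huv''⟩
    · exact hne' hcd
    · exact hne ((Prod.mk.injEq .. ▸ huv'').1.trans hsc.symm)
  have h2 : t ≠ v → (t, v) ∈ e \ a := by
    intro hne
    refine ⟨htv.resolve_right hne, ?_⟩
    intro hmem
    have htA := (mem_pji.1 (hsub hmem)).2.1
    obtain ⟨hcd, htc⟩ := sideAB hF htA hz'.2.2
    rcases hcross with ⟨hne', _⟩ | ⟨_, huv''⟩
    · exact hne' hcd
    · exact hne (htc.trans ((Prod.mk.injEq .. ▸ huv'').2).symm)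
  have hchain : Relation.TransGen (fun x y => (x, y) ∈ e \ a) s t := hst
  have hfull : Relation.TransGen (fun x y => (x, y) ∈ e \ a) u v := by
    by_cases h3 : u = s
    · by_cases h4 : t = v
      · exact h3 ▸ h4 ▸ hchain
      · exact h3 ▸ (hchain.tail (h2 h4))
    · by_cases h4 : t = v
      · exact h4 ▸ (Relation.TransGen.head (r := fun x y => (x, y) ∈ e \ a) (h1 h3) hchain)
      · exact (Relation.TransGen.head (r := fun x y => (x, y) ∈ e \ a) (h1 h3) hchain).tail (h2 h4)
  exact huv'.2 hfull

end Aux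

section Main
variable {E : Type*}

/-- The witness triple associated to a pair in the interior of a regular closed set. -/
lemma exists_pji (e : Set (E × E)) (he : TransRel e) {a : Set (E × E)}
    (hae : a ⊆ e) {c d : E} (hcd : (c, d) ∈ tint e a) :
    ∃ U : Set E, Ftriple e c d U ∧ (c, d) ∈ pji e c d U ∧ pji e c d U ⊆ a := by
  classical
  set U : Set E := {x | x ∈ cce e c d ∧ x ≠ c ∧ (c, x) ∈ tint e a} with hU
  have hcde : (c, d) ∈ e := hcd.1
  have hF : Ftriple e c d U := by
    refine ⟨hcde, fun x hx => hx.1, fun hne => ⟨fun hc => hc.2.1 rfl, ?_⟩⟩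
    exact ⟨⟨Or.inl hcde, rle_refl d⟩, Ne.symm hne, hcd⟩
  refine ⟨U, hF, mem_pji.2 ⟨hcde, Or.inl rfl, Or.inl rfl⟩, ?_⟩
  rintro ⟨x, y⟩ hxy
  obtain ⟨hxe, hA, hB⟩ := mem_pji.1 hxy
  have hyint : (c, y) ∈ tint e a := by
    rcases hB with rfl | hy
    · exact hcd
    · exact hy.2.2
  by_cases hxc : x = c
  · subst hxc
    exact tint_subset hae hyint
  · rcases hA with rfl | hx
    · exact absurd rfl hxc
    · -- x ∈ [c,d] \ U, x ≠ c, so (c,x) ∈ tcl (e \ a)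
      have hcx : (c, x) ∈ e := hx.1.1.resolve_right (fun h => hxc h.symm)
      have hcx' : (c, x) ∈ tcl (e \ a) := by
        by_contra h
        exact hx.2 ⟨hx.1, hxc, hcx, h⟩
      by_contra hna
      exact hyint.2 (Relation.TransGen.tail hcx' ⟨hxe, hna⟩)

theorem regClosed_spatial' (e : Set (E × E)) (he : TransRel e) :
    ∀ a : Set (E × E), RegClosed e a →
      a = tcl (⋃₀ {p | (∃ (c d : E) (U : Set E), Ftriple e c d U ∧ p = pji e c d U) ∧ p ⊆ a}) ∧
      a = tcl (⋃₀ {p | RegClosed e p ∧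
        (∃ p', RegClosed e p' ∧ p' ⊂ p ∧ ∀ x, RegClosed e x → x ⊂ p → x ⊆ p') ∧ p ⊆ a}) := by
  intro a ha
  obtain ⟨hae, haeq⟩ := ha
  have hta : TransRel a := haeq ▸ transRel_tcl _
  constructor
  · apply Set.Subset.antisymm
    · nth_rewrite 1 [haeq]
      apply tcl_mono
      rintro ⟨c, d⟩ hcd
      obtain ⟨U, hF, hmem, hsub⟩ := exists_pji e he hae hcd
      exact ⟨pji e c d U, ⟨⟨c, d, U, hF, rfl⟩, hsub⟩, hmem⟩
    · exact tcl_subset (Set.sUnion_subset fun p hp => hp.2) hta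
  · apply Set.Subset.antisymm
    · nth_rewrite 1 [haeq]
      apply tcl_mono
      rintro ⟨c, d⟩ hcd
      obtain ⟨U, hF, hmem, hsub⟩ := exists_pji e he hae hcd
      obtain ⟨hpe, hpt, hpo⟩ := pji_clopen he hF
      obtain ⟨hme, hmt, hmo⟩ := pminus_clopen he hF
      refine ⟨pji e c d U, ⟨clopen_regClosed hpe hpt hpo, ⟨pminus e c d U,
        clopen_regClosed hme hmt hmo, ?_, ?_⟩, hsub⟩, hmem⟩
      · -- pminus ⊂ pji, witnessed by (c,d)
        constructor
        · exact fun z hz => hz.1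
        · intro hcon
          have h1 : (c, d) ∈ pminus e c d U := hcon hmem
          have := (mem_pminus.1 h1).2
          by_cases hcdne : c = d
          · exact this (Or.inr ⟨hcdne, by rw [hcdne]⟩)
          · exact this (Or.inl ⟨hcdne, eqv_refl c, eqv_refl d⟩)
      · -- minimality
        intro x hx hxp
        by_contra hns
        obtain ⟨⟨u, v⟩, hux, hum⟩ := Set.not_subset.1 hns
        have hup : (u, v) ∈ pji e c d U := hxp.1 hux
        have hcross : crossS e c d u v := by
          by_contra hnc
          exact hum (mem_pminus.2 ⟨hup, hnc⟩)
        exact hxp.2 (pji_min he hF hx hxp.1 hux hcross)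
    · exact tcl_subset (Set.sUnion_subset fun p hp => hp.2.2) hta

end Main

/-- every regular closed subset of `e` is the transitive closure of the union
of the sets `⟨c,d,U⟩` below it; in particular `Reg(e)` is spatial: every element is the
join (transitive closure of the union) of the completely join-irreducible elements below it. -/

theorem regClosed_spatial {E : Type*} (e : Set (E × E)) (he : TransRel e) :
    ∀ a : Set (E × E), RegClosed e a →
      a = tcl (⋃₀ {p | (∃ (c d : E) (U : Set E), Ftriple e c d U ∧ p = pji e c d U) ∧ p ⊆ a}) ∧
      a = tcl (⋃₀ {p | RegClosed e p ∧
        (∃ p', RegClosed e p' ∧ p' ⊂ p ∧ ∀ x, RegClosed e x → x ⊂ p → x ⊆ p') ∧ p ⊆ a}) := by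
  exact regClosed_spatial' e he
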